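/- Let x ∈ C³(U,ℝ³) be a conformal immersion on an open set U ⊂ ℝ², i.e. |x_u| = |x_v|, x_u·x_v = 0 and W := |x_u|² > 0 on U. With N := W⁻¹x_u∧x_v, h_jk := x_{u^j u^k}·N (u¹ = u, u² = v) and mean curvature H := (h₁₁+h₂₂)/(2W), the Codazzi–Mainardi equations hold in the form ∂_v h₂₁ − ∂_u h₂₂ + W_u H = 0 and ∂_v h₁₁ − ∂_u h₁₂ − W_v H = 0 on U. -/

import Mathlib

noncomputable section

open Real Set MeasureTheory Filter NNReal

/-- Points of `ℝ³`, realized as functions `Fin 3 → ℝ`. -/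
abbrev R3 : Type := Fin 3 → ℝ

/-- The Euclidean inner product on `ℝ³`. -/
def dot3 (a b : R3) : ℝ := a 0 * b 0 + a 1 * b 1 + a 2 * b 2

/-- The cross product on `ℝ³`. -/
def cross3 (a b : R3) : R3 :=
  ![a 1 * b 2 - a 2 * b 1, a 2 * b 0 - a 0 * b 2, a 0 * b 1 - a 1 * b 0]

/-- The Euclidean norm on `ℝ³`. -/
def norm3 (a : R3) : ℝ := Real.sqrt (dot3 a a)

/-- The upper half disc `B⁺`. -/
def Bplus : Set (ℝ × ℝ) := {w | w.1 ^ 2 + w.2 ^ 2 < 1 ∧ 0 < w.2}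

/-- Partial derivative in the `u`-direction of a vector-valued map. -/
def du (x : ℝ × ℝ → R3) (w : ℝ × ℝ) : R3 := fderiv ℝ x w ((1 : ℝ), (0 : ℝ))

/-- Partial derivative in the `v`-direction of a vector-valued map. -/
def dv (x : ℝ × ℝ → R3) (w : ℝ × ℝ) : R3 := fderiv ℝ x w ((0 : ℝ), (1 : ℝ))

/-- Partial derivative in the `u`-direction of a scalar function. -/
def duS (f : ℝ × ℝ → ℝ) (w : ℝ × ℝ) : ℝ := fderiv ℝ f w ((1 : ℝ), (0 : ℝ))

/-- Partial derivative in the `v`-direction of a scalar function. -/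
def dvS (f : ℝ × ℝ → ℝ) (w : ℝ × ℝ) : ℝ := fderiv ℝ f w ((0 : ℝ), (1 : ℝ))

/-- The area element `W = |x_u ∧ x_v|`. -/
def Wf (x : ℝ × ℝ → R3) (w : ℝ × ℝ) : ℝ := norm3 (cross3 (du x w) (dv x w))

/-- The unit normal `N = W⁻¹ x_u ∧ x_v`. -/
def Nf (x : ℝ × ℝ → R3) (w : ℝ × ℝ) : R3 := (Wf x w)⁻¹ • cross3 (du x w) (dv x w)

/-- Coefficient `h₁₁ = x_uu · N` of the second fundamental form. -/
def h11 (x : ℝ × ℝ → R3) (w : ℝ × ℝ) : ℝ := dot3 (du (du x) w) (Nf x w)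

/-- Coefficient `h₁₂ = x_uv · N` of the second fundamental form. -/
def h12 (x : ℝ × ℝ → R3) (w : ℝ × ℝ) : ℝ := dot3 (dv (du x) w) (Nf x w)

/-- Coefficient `h₂₁ = x_vu · N` of the second fundamental form. -/
def h21 (x : ℝ × ℝ → R3) (w : ℝ × ℝ) : ℝ := dot3 (du (dv x) w) (Nf x w)

/-- Coefficient `h₂₂ = x_vv · N` of the second fundamental form. -/
def h22 (x : ℝ × ℝ → R3) (w : ℝ × ℝ) : ℝ := dot3 (dv (dv x) w) (Nf x w)

/-- The Gaussian curvature `K = (h₁₁h₂₂ − h₁₂²)/W²`. -/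
def Kg (x : ℝ × ℝ → R3) (w : ℝ × ℝ) : ℝ :=
  (h11 x w * h22 x w - (h12 x w) ^ 2) / (Wf x w) ^ 2

/-- The spatial gradient of a function on `ℝ³`. -/
def grad3 (H : R3 → ℝ) (p : R3) : R3 := fun i => fderiv ℝ H p (Pi.single i 1)

/-- The divergence of a vector field on `ℝ³`. -/
def divQ (Q : R3 → R3) (p : R3) : ℝ :=
  fderiv ℝ Q p (Pi.single 0 1) 0 + fderiv ℝ Q p (Pi.single 1 1) 1 +
    fderiv ℝ Q p (Pi.single 2 1) 2

/-- `x` is a surface of prescribed mean curvature `H` on `B⁺`: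
`Δx = 2H(x) x_u∧x_v` together with the conformality relations. -/
def IsHSurface (H : R3 → ℝ) (x : ℝ × ℝ → R3) : Prop :=
  ∀ w ∈ Bplus,
    du (du x) w + dv (dv x) w = (2 * H (x w)) • cross3 (du x w) (dv x w) ∧
    dot3 (du x w) (du x w) = dot3 (dv x w) (dv x w) ∧
    dot3 (du x w) (dv x w) = 0

/-- The mean curvature `H = (h₁₁ + h₂₂)/(2W)` of a conformal immersion. -/
def Hmean (x : ℝ × ℝ → R3) (w : ℝ × ℝ) : ℝ := (h11 x w + h22 x w) / (2 * Wf x w)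


/-! ### Auxiliary lemmas -/

section Aux

lemma cross3_app0 (a b : R3) : cross3 a b 0 = a 1 * b 2 - a 2 * b 1 := rfl
lemma cross3_app1 (a b : R3) : cross3 a b 1 = a 2 * b 0 - a 0 * b 2 := rfl
lemma cross3_app2 (a b : R3) : cross3 a b 2 = a 0 * b 1 - a 1 * b 0 := rfl

lemma dot3_comm (a b : R3) : dot3 a b = dot3 b a := by simp only [dot3]; ring

lemma dot3_smul_right (r : ℝ) (a b : R3) : dot3 a (r • b) = r * dot3 a b := by
  simp only [dot3, Pi.smul_apply, smul_eq_mul]; ring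

lemma dot3_cross_self (p q : R3) : dot3 (cross3 p q) (cross3 p q)
    = dot3 p p * dot3 q q - dot3 p q ^ 2 := by
  simp only [dot3, cross3_app0, cross3_app1, cross3_app2]; ring

lemma trip_mid_self (z q : R3) : dot3 z (cross3 z q) = 0 := by
  simp only [dot3, cross3_app0, cross3_app1, cross3_app2]; ring

lemma tripA (p q y z : R3) :
    (dot3 p p * dot3 q q - dot3 p q ^ 2) * dot3 z (cross3 p y)
      = dot3 y (cross3 p q) * (dot3 z p * dot3 p q - dot3 z q * dot3 p p)
        + (dot3 y q * dot3 p p - dot3 y p * dot3 p q) * dot3 z (cross3 p q) := by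
  simp only [dot3, cross3_app0, cross3_app1, cross3_app2]; ring

lemma tripB (p q y z : R3) :
    (dot3 p p * dot3 q q - dot3 p q ^ 2) * dot3 z (cross3 y q)
      = dot3 y (cross3 p q) * (dot3 z q * dot3 p q - dot3 z p * dot3 q q)
        + (dot3 y p * dot3 q q - dot3 y q * dot3 p q) * dot3 z (cross3 p q) := by
  simp only [dot3, cross3_app0, cross3_app1, cross3_app2]; ring

lemma tripA' {p q : R3} (y z : R3) (hpq : dot3 p q = 0) (hqq : dot3 q q = dot3 p p)
    (hne : dot3 p p ≠ 0) :
    dot3 z (cross3 p y) * dot3 p p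
      = dot3 y q * dot3 z (cross3 p q) - dot3 y (cross3 p q) * dot3 z q := by
  have A := tripA p q y z
  rw [hpq, hqq] at A
  apply mul_left_cancel₀ hne
  linear_combination A

lemma tripB' {p q : R3} (y z : R3) (hpq : dot3 p q = 0) (hqq : dot3 q q = dot3 p p)
    (hne : dot3 p p ≠ 0) :
    dot3 z (cross3 y q) * dot3 p p
      = dot3 y p * dot3 z (cross3 p q) - dot3 y (cross3 p q) * dot3 z p := by
  have A := tripB p q y z
  rw [hpq, hqq] at A
  apply mul_left_cancel₀ hne
  linear_combination A

variable {F G K : ℝ × ℝ → R3} {f g : ℝ × ℝ → ℝ} {w e : ℝ × ℝ}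

lemma diffAt_eval (hF : DifferentiableAt ℝ F w) (i : Fin 3) :
    DifferentiableAt ℝ (fun y => F y i) w :=
  (ContinuousLinearMap.proj i : R3 →L[ℝ] ℝ).differentiableAt.comp w hF

lemma fderiv_eval_apply (hF : DifferentiableAt ℝ F w) (i : Fin 3) :
    fderiv ℝ (fun y => F y i) w e = fderiv ℝ F w e i := by
  have h := ((ContinuousLinearMap.proj i : R3 →L[ℝ] ℝ).hasFDerivAt.comp w hF.hasFDerivAt).fderiv
  rw [show (fun y => F y i) = ((ContinuousLinearMap.proj i : R3 →L[ℝ] ℝ) ∘ F) from rfl, h]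
  rfl

lemma fderiv_mul_apply (hf : DifferentiableAt ℝ f w) (hg : DifferentiableAt ℝ g w) :
    fderiv ℝ (fun y => f y * g y) w e = fderiv ℝ f w e * g w + f w * fderiv ℝ g w e := by
  rw [fderiv_fun_mul hf hg]; simp [smul_eq_mul]; ring

lemma fderiv_add_apply (hf : DifferentiableAt ℝ f w) (hg : DifferentiableAt ℝ g w) :
    fderiv ℝ (fun y => f y + g y) w e = fderiv ℝ f w e + fderiv ℝ g w e := by
  rw [fderiv_fun_add hf hg]; simp

lemma fderiv_sub_apply (hf : DifferentiableAt ℝ f w) (hg : DifferentiableAt ℝ g w) :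
    fderiv ℝ (fun y => f y - g y) w e = fderiv ℝ f w e - fderiv ℝ g w e := by
  rw [fderiv_fun_sub hf hg]; simp

lemma fderiv_inv_apply (hf : DifferentiableAt ℝ f w) (hne : f w ≠ 0) :
    fderiv ℝ (fun y => (f y)⁻¹) w e = -fderiv ℝ f w e / f w ^ 2 := by
  have h1 : fderiv ℝ (fun y => (f y)⁻¹) w = (fderiv ℝ Inv.inv (f w)).comp (fderiv ℝ f w) :=
    fderiv_comp w (differentiableAt_inv hne) hf
  rw [h1, fderiv_inv' hne]
  simp only [ContinuousLinearMap.coe_comp', Function.comp_apply,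
    ContinuousLinearMap.neg_apply, ContinuousLinearMap.mulLeftRight_apply]
  rw [pow_two, div_eq_mul_inv, mul_inv]
  ring

lemma diffAt_dot3 (hF : DifferentiableAt ℝ F w) (hG : DifferentiableAt ℝ G w) :
    DifferentiableAt ℝ (fun y => dot3 (F y) (G y)) w := by
  simp only [dot3]
  exact (((diffAt_eval hF 0).mul (diffAt_eval hG 0)).add
    ((diffAt_eval hF 1).mul (diffAt_eval hG 1))).add ((diffAt_eval hF 2).mul (diffAt_eval hG 2))

lemma fderiv_dot3_apply (hF : DifferentiableAt ℝ F w) (hG : DifferentiableAt ℝ G w) :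
    fderiv ℝ (fun y => dot3 (F y) (G y)) w e
      = dot3 (fderiv ℝ F w e) (G w) + dot3 (F w) (fderiv ℝ G w e) := by
  simp only [dot3]
  rw [fderiv_add_apply (((diffAt_eval hF 0).fun_mul (diffAt_eval hG 0)).fun_add
        ((diffAt_eval hF 1).fun_mul (diffAt_eval hG 1))) ((diffAt_eval hF 2).fun_mul (diffAt_eval hG 2)),
    fderiv_add_apply ((diffAt_eval hF 0).fun_mul (diffAt_eval hG 0))
      ((diffAt_eval hF 1).fun_mul (diffAt_eval hG 1)),
    fderiv_mul_apply (diffAt_eval hF 0) (diffAt_eval hG 0),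
    fderiv_mul_apply (diffAt_eval hF 1) (diffAt_eval hG 1),
    fderiv_mul_apply (diffAt_eval hF 2) (diffAt_eval hG 2),
    fderiv_eval_apply hF 0, fderiv_eval_apply hF 1, fderiv_eval_apply hF 2,
    fderiv_eval_apply hG 0, fderiv_eval_apply hG 1, fderiv_eval_apply hG 2]
  ring

lemma diffAt_cross_term (hG : DifferentiableAt ℝ G w) (hK : DifferentiableAt ℝ K w)
    (i j k l : Fin 3) :
    DifferentiableAt ℝ (fun y => G y i * K y j - G y k * K y l) w :=
  ((diffAt_eval hG i).fun_mul (diffAt_eval hK j)).fun_sub ((diffAt_eval hG k).fun_mul (diffAt_eval hK l))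

lemma diffAt_trip (hF : DifferentiableAt ℝ F w) (hG : DifferentiableAt ℝ G w)
    (hK : DifferentiableAt ℝ K w) :
    DifferentiableAt ℝ (fun y => dot3 (F y) (cross3 (G y) (K y))) w := by
  simp only [dot3, cross3_app0, cross3_app1, cross3_app2]
  exact (((diffAt_eval hF 0).fun_mul (diffAt_cross_term hG hK 1 2 2 1)).fun_add
    ((diffAt_eval hF 1).fun_mul (diffAt_cross_term hG hK 2 0 0 2))).fun_add
    ((diffAt_eval hF 2).fun_mul (diffAt_cross_term hG hK 0 1 1 0))

lemma fderiv_trip_apply (hF : DifferentiableAt ℝ F w) (hG : DifferentiableAt ℝ G w)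
    (hK : DifferentiableAt ℝ K w) :
    fderiv ℝ (fun y => dot3 (F y) (cross3 (G y) (K y))) w e
      = dot3 (fderiv ℝ F w e) (cross3 (G w) (K w))
        + dot3 (F w) (cross3 (fderiv ℝ G w e) (K w))
        + dot3 (F w) (cross3 (G w) (fderiv ℝ K w e)) := by
  have dF := diffAt_eval hF
  have dG := diffAt_eval hG
  have dK := diffAt_eval hK
  simp only [dot3, cross3_app0, cross3_app1, cross3_app2]
  rw [fderiv_add_apply (((dF 0).fun_mul (diffAt_cross_term hG hK 1 2 2 1)).fun_add
        ((dF 1).fun_mul (diffAt_cross_term hG hK 2 0 0 2)))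
      ((dF 2).fun_mul (diffAt_cross_term hG hK 0 1 1 0)),
    fderiv_add_apply ((dF 0).fun_mul (diffAt_cross_term hG hK 1 2 2 1))
      ((dF 1).fun_mul (diffAt_cross_term hG hK 2 0 0 2)),
    fderiv_mul_apply (dF 0) (diffAt_cross_term hG hK 1 2 2 1),
    fderiv_mul_apply (dF 1) (diffAt_cross_term hG hK 2 0 0 2),
    fderiv_mul_apply (dF 2) (diffAt_cross_term hG hK 0 1 1 0),
    fderiv_sub_apply ((dG 1).fun_mul (dK 2)) ((dG 2).fun_mul (dK 1)),
    fderiv_sub_apply ((dG 2).fun_mul (dK 0)) ((dG 0).fun_mul (dK 2)),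
    fderiv_sub_apply ((dG 0).fun_mul (dK 1)) ((dG 1).fun_mul (dK 0)),
    fderiv_mul_apply (dG 1) (dK 2), fderiv_mul_apply (dG 2) (dK 1),
    fderiv_mul_apply (dG 2) (dK 0), fderiv_mul_apply (dG 0) (dK 2),
    fderiv_mul_apply (dG 0) (dK 1), fderiv_mul_apply (dG 1) (dK 0),
    fderiv_eval_apply hF 0, fderiv_eval_apply hF 1, fderiv_eval_apply hF 2,
    fderiv_eval_apply hG 0, fderiv_eval_apply hG 1, fderiv_eval_apply hG 2,
    fderiv_eval_apply hK 0, fderiv_eval_apply hK 1, fderiv_eval_apply hK 2]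
  ring

lemma clairaut {U : Set (ℝ × ℝ)} (hU : IsOpen U) {g : ℝ × ℝ → R3}
    (hg : ContDiffOn ℝ 2 g U) {y : ℝ × ℝ} (hy : y ∈ U) :
    du (dv g) y = dv (du g) y := by
  have hgd : DifferentiableOn ℝ g U := hg.differentiableOn two_ne_zero
  have hfd : ContDiffOn ℝ 1 (fderiv ℝ g) U := hg.fderiv_of_isOpen hU (by norm_num)
  have hfdy : DifferentiableAt ℝ (fderiv ℝ g) y :=
    (hfd.differentiableOn one_ne_zero).differentiableAt (hU.mem_nhds hy)
  have hev : ∀ᶠ z in nhds y, HasFDerivAt g (fderiv ℝ g z) z := by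
    filter_upwards [hU.mem_nhds hy] with z hz
    exact ((hgd z hz).differentiableAt (hU.mem_nhds hz)).hasFDerivAt
  have hsymm := second_derivative_symmetric_of_eventually hev hfdy.hasFDerivAt
    ((1 : ℝ), (0 : ℝ)) ((0 : ℝ), (1 : ℝ))
  have h1 : ∀ (v : ℝ × ℝ), fderiv ℝ (fun z => fderiv ℝ g z v) y
      = (ContinuousLinearMap.apply ℝ R3 v).comp (fderiv ℝ (fderiv ℝ g) y) := fun v =>
    ((ContinuousLinearMap.apply ℝ R3 v).hasFDerivAt.comp y hfdy.hasFDerivAt).fderiv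
  show fderiv ℝ (fun z => fderiv ℝ g z ((0:ℝ),(1:ℝ))) y ((1:ℝ),(0:ℝ))
      = fderiv ℝ (fun z => fderiv ℝ g z ((1:ℝ),(0:ℝ))) y ((0:ℝ),(1:ℝ))
  rw [h1, h1]
  exact hsymm

end Aux

/-- For a `C³` conformal immersion `x` on an open set `U ⊂ ℝ²` the
Codazzi–Mainardi equations hold in the form
`∂_v h₂₁ − ∂_u h₂₂ + W_u H = 0` and `∂_v h₁₁ − ∂_u h₁₂ − W_v H = 0` on `U`. -/
theorem codazzi_mainardi (U : Set (ℝ × ℝ)) (hU : IsOpen U) (x : ℝ × ℝ → R3)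
    (hx : ContDiffOn ℝ 3 x U)
    (hconf : ∀ w ∈ U,
      dot3 (du x w) (du x w) = dot3 (dv x w) (dv x w) ∧
      dot3 (du x w) (dv x w) = 0 ∧ 0 < dot3 (du x w) (du x w)) :
    ∀ w ∈ U,
      dvS (h21 x) w - duS (h22 x) w + duS (Wf x) w * Hmean x w = 0 ∧
      dvS (h11 x) w - duS (h12 x) w - dvS (Wf x) w * Hmean x w = 0 := by
  intro w hw
  -- regularity
  have h2 : ContDiffOn ℝ 2 (fderiv ℝ x) U := hx.fderiv_of_isOpen hU (by norm_num)
  have hdu2 : ContDiffOn ℝ 2 (du x) U :=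
    (ContinuousLinearMap.apply ℝ R3 ((1:ℝ),(0:ℝ))).contDiff.comp_contDiffOn h2
  have hdv2 : ContDiffOn ℝ 2 (dv x) U :=
    (ContinuousLinearMap.apply ℝ R3 ((0:ℝ),(1:ℝ))).contDiff.comp_contDiffOn h2
  have h1du : ContDiffOn ℝ 1 (fderiv ℝ (du x)) U := hdu2.fderiv_of_isOpen hU (by norm_num)
  have h1dv : ContDiffOn ℝ 1 (fderiv ℝ (dv x)) U := hdv2.fderiv_of_isOpen hU (by norm_num)
  have hduu1 : ContDiffOn ℝ 1 (du (du x)) U :=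
    (ContinuousLinearMap.apply ℝ R3 ((1:ℝ),(0:ℝ))).contDiff.comp_contDiffOn h1du
  have hdvu1 : ContDiffOn ℝ 1 (dv (du x)) U :=
    (ContinuousLinearMap.apply ℝ R3 ((0:ℝ),(1:ℝ))).contDiff.comp_contDiffOn h1du
  have hudv1 : ContDiffOn ℝ 1 (du (dv x)) U :=
    (ContinuousLinearMap.apply ℝ R3 ((1:ℝ),(0:ℝ))).contDiff.comp_contDiffOn h1dv
  have hvdv1 : ContDiffOn ℝ 1 (dv (dv x)) U :=
    (ContinuousLinearMap.apply ℝ R3 ((0:ℝ),(1:ℝ))).contDiff.comp_contDiffOn h1dv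
  have dAt : ∀ {F : ℝ × ℝ → R3}, ContDiffOn ℝ 1 F U →
      ∀ {y : ℝ × ℝ}, y ∈ U → DifferentiableAt ℝ F y := fun {F} hF {y} hy =>
    (hF.differentiableOn one_ne_zero).differentiableAt (hU.mem_nhds hy)
  have hduU : ∀ y ∈ U, DifferentiableAt ℝ (du x) y := fun y hy => dAt (hdu2.of_le one_le_two) hy
  have hdvU : ∀ y ∈ U, DifferentiableAt ℝ (dv x) y := fun y hy => dAt (hdv2.of_le one_le_two) hy
  have hduw : DifferentiableAt ℝ (du x) w := hduU w hw
  have hdvw : DifferentiableAt ℝ (dv x) w := hdvU w hw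
  have hauw : DifferentiableAt ℝ (du (du x)) w := dAt hduu1 hw
  have hbvw : DifferentiableAt ℝ (dv (du x)) w := dAt hdvu1 hw
  have hbuw : DifferentiableAt ℝ (du (dv x)) w := dAt hudv1 hw
  have hcvw : DifferentiableAt ℝ (dv (dv x)) w := dAt hvdv1 hw
  -- notation for point values
  set p : R3 := du x w with hp
  set q : R3 := dv x w with hq
  set a : R3 := du (du x) w with ha
  set b : R3 := dv (du x) w with hb
  set c : R3 := dv (dv x) w with hc
  set n : R3 := cross3 p q with hn
  set P : ℝ := dot3 p p with hP
  -- conformality at w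
  obtain ⟨hc1, hc2, hc3⟩ := hconf w hw
  have hPpos : 0 < P := hc3
  have hPne : P ≠ 0 := ne_of_gt hPpos
  -- Clairaut
  have hbb : du (dv x) w = b := (clairaut hU (hx.of_le (by norm_num)) hw)
  have h3a : du (dv (dv x)) w = dv (du (dv x)) w := clairaut hU hdv2 hw
  have h3c : du (dv (du x)) w = dv (du (du x)) w := clairaut hU hdu2 hw
  -- Wf agrees with P near w
  have hWpt : ∀ y ∈ U, Wf x y = dot3 (du x y) (du x y) := by
    intro y hy
    obtain ⟨hc1', hc2', hc3'⟩ := hconf y hy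
    show Real.sqrt (dot3 (cross3 (du x y) (dv x y)) (cross3 (du x y) (dv x y)))
        = dot3 (du x y) (du x y)
    rw [dot3_cross_self, hc2', ← hc1']
    rw [show dot3 (du x y) (du x y) * dot3 (du x y) (du x y) - 0 ^ 2
        = dot3 (du x y) (du x y) ^ 2 by ring]
    exact Real.sqrt_sq hc3'.le
  have hWev : Wf x =ᶠ[nhds w] fun y => dot3 (du x y) (du x y) := by
    filter_upwards [hU.mem_nhds hw] with y hy using hWpt y hy
  have hWw : Wf x w = P := hWpt w hw
  -- differentiability of P-function
  have hPdiff : DifferentiableAt ℝ (fun y => dot3 (du x y) (du x y)) w := diffAt_dot3 hduw hduw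
  -- derivatives of Wf
  have HdWu : duS (Wf x) w = dot3 a p + dot3 p a := by
    show fderiv ℝ (Wf x) w ((1:ℝ),(0:ℝ)) = _
    rw [hWev.fderiv_eq, fderiv_dot3_apply hduw hduw]
    rfl
  have HdWv : dvS (Wf x) w = dot3 b p + dot3 p b := by
    show fderiv ℝ (Wf x) w ((0:ℝ),(1:ℝ)) = _
    rw [hWev.fderiv_eq, fderiv_dot3_apply hduw hduw]
    rfl
  -- conformality relations differentiated
  have hPQev : (fun y => dot3 (du x y) (du x y)) =ᶠ[nhds w]
      (fun y => dot3 (dv x y) (dv x y)) := by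
    filter_upwards [hU.mem_nhds hw] with y hy using (hconf y hy).1
  have hPQ : fderiv ℝ (fun y => dot3 (du x y) (du x y)) w
      = fderiv ℝ (fun y => dot3 (dv x y) (dv x y)) w := hPQev.fderiv_eq
  have r1 : dot3 a p + dot3 p a = dot3 (du (dv x) w) q + dot3 q (du (dv x) w) := by
    have := congrFun (congrArg DFunLike.coe hPQ) ((1:ℝ),(0:ℝ))
    rwa [fderiv_dot3_apply hduw hduw, fderiv_dot3_apply hdvw hdvw] at this
  have r2 : dot3 b p + dot3 p b = dot3 c q + dot3 q c := by
    have := congrFun (congrArg DFunLike.coe hPQ) ((0:ℝ),(1:ℝ))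
    rwa [fderiv_dot3_apply hduw hduw, fderiv_dot3_apply hdvw hdvw] at this
  have hZev : (fun y => dot3 (du x y) (dv x y)) =ᶠ[nhds w] (fun _ => (0:ℝ)) := by
    filter_upwards [hU.mem_nhds hw] with y hy using (hconf y hy).2.1
  have hZ : fderiv ℝ (fun y => dot3 (du x y) (dv x y)) w
      = fderiv ℝ (fun _ => (0:ℝ)) w := hZev.fderiv_eq
  have r3 : dot3 a q + dot3 p (du (dv x) w) = 0 := by
    have := congrFun (congrArg DFunLike.coe hZ) ((1:ℝ),(0:ℝ))
    rwa [fderiv_dot3_apply hduw hdvw, fderiv_const_apply, ContinuousLinearMap.zero_apply] at this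
  have r4 : dot3 b q + dot3 p c = 0 := by
    have := congrFun (congrArg DFunLike.coe hZ) ((0:ℝ),(1:ℝ))
    rwa [fderiv_dot3_apply hduw hdvw, fderiv_const_apply, ContinuousLinearMap.zero_apply] at this
  rw [hbb] at r1 r3
  -- canonical forms
  have r1' : dot3 a p = dot3 b q := by
    have e1 := dot3_comm p a; have e2 := dot3_comm q b; linarith
  have r2' : dot3 b p = dot3 c q := by
    have e1 := dot3_comm p b; have e2 := dot3_comm q c; linarith
  have r3' : dot3 a q = -dot3 b p := by
    have e1 := dot3_comm p b; linarith
  have r4' : dot3 c p = -dot3 b q := by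
    have e1 := dot3_comm p c; linarith
  -- h functions as explicit products near w
  have hform : ∀ (F : ℝ × ℝ → R3) (y : ℝ × ℝ), dot3 (F y) (Nf x y)
      = (Wf x y)⁻¹ * dot3 (F y) (cross3 (du x y) (dv x y)) := by
    intro F y
    show dot3 (F y) ((Wf x y)⁻¹ • cross3 (du x y) (dv x y)) = _
    rw [dot3_smul_right]
  -- triple-product identities at w
  have hqq' : dot3 q q = dot3 p p := hc1.symm
  have e1 : dot3 b (cross3 p c) * P = dot3 c q * dot3 b n - dot3 c n * dot3 b q :=
    tripA' c b hc2 hqq' hPne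
  have e2 : dot3 c (cross3 p b) * P = dot3 b q * dot3 c n - dot3 b n * dot3 c q :=
    tripA' b c hc2 hqq' hPne
  have e3 : dot3 c (cross3 a q) * P = dot3 a p * dot3 c n - dot3 a n * dot3 c p :=
    tripB' a c hc2 hqq' hPne
  have f1 : dot3 a (cross3 b q) * P = dot3 b p * dot3 a n - dot3 b n * dot3 a p :=
    tripB' b a hc2 hqq' hPne
  have f2 : dot3 b (cross3 a q) * P = dot3 a p * dot3 b n - dot3 a n * dot3 b p :=
    tripB' a b hc2 hqq' hPne
  have f3 : dot3 a (cross3 p c) * P = dot3 c q * dot3 a n - dot3 c n * dot3 a q :=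
    tripA' c a hc2 hqq' hPne
  -- Hmean at w
  have Hm : Hmean x w = (P⁻¹ * dot3 a n + P⁻¹ * dot3 c n) / (2 * P) := by
    show (h11 x w + h22 x w) / (2 * Wf x w) = _
    rw [show h11 x w = dot3 (du (du x) w) (Nf x w) from rfl,
      show h22 x w = dot3 (dv (dv x) w) (Nf x w) from rfl, hform, hform, hWw]
  -- derivatives of the h functions
  have hmkev : ∀ (F : ℝ × ℝ → R3), (fun y => dot3 (F y) (Nf x y)) =ᶠ[nhds w]
      (fun y => (dot3 (du x y) (du x y))⁻¹ * dot3 (F y) (cross3 (du x y) (dv x y))) := by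
    intro F
    filter_upwards [hU.mem_nhds hw] with y hy
    rw [hform F y, hWpt y hy]
  have hder : ∀ (F : ℝ × ℝ → R3), DifferentiableAt ℝ F w → ∀ (e : ℝ × ℝ),
      fderiv ℝ (fun y => dot3 (F y) (Nf x y)) w e
        = -(dot3 (fderiv ℝ (du x) w e) p + dot3 p (fderiv ℝ (du x) w e)) / P ^ 2
            * dot3 (F w) n
          + P⁻¹ * (dot3 (fderiv ℝ F w e) n
            + dot3 (F w) (cross3 (fderiv ℝ (du x) w e) q)
            + dot3 (F w) (cross3 p (fderiv ℝ (dv x) w e))) := by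
    intro F hF e
    rw [(hmkev F).fderiv_eq,
      fderiv_mul_apply (hPdiff.fun_inv hPne) (diffAt_trip hF hduw hdvw),
      fderiv_inv_apply hPdiff hPne, fderiv_dot3_apply hduw hduw,
      fderiv_trip_apply hF hduw hdvw]
  constructor
  · -- first Codazzi equation
    have Hd21 : dvS (h21 x) w
        = -(dot3 b p + dot3 p b) / P ^ 2 * dot3 b n
          + P⁻¹ * (dot3 (dv (du (dv x)) w) n + dot3 b (cross3 b q) + dot3 b (cross3 p c)) := by
      have := hder (du (dv x)) hbuw ((0:ℝ),(1:ℝ))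
      rw [show dvS (h21 x) w = fderiv ℝ (fun y => dot3 (du (dv x) y) (Nf x y)) w ((0:ℝ),(1:ℝ))
        from rfl, this, hbb]
      rfl
    have Hd22 : duS (h22 x) w
        = -(dot3 a p + dot3 p a) / P ^ 2 * dot3 c n
          + P⁻¹ * (dot3 (du (dv (dv x)) w) n + dot3 c (cross3 a q) + dot3 c (cross3 p b)) := by
      have := hder (dv (dv x)) hcvw ((1:ℝ),(0:ℝ))
      rw [show duS (h22 x) w = fderiv ℝ (fun y => dot3 (dv (dv x) y) (Nf x y)) w ((1:ℝ),(0:ℝ))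
        from rfl, this,
        show (fderiv ℝ (dv x) w ((1:ℝ),(0:ℝ))) = b from hbb]
      rfl
    rw [Hd21, Hd22, HdWu, Hm, h3a, trip_mid_self]
    have cpa := dot3_comm p a
    have cpb := dot3_comm p b
    rw [cpa, cpb]
    field_simp
    linear_combination 2*(e1 - e2 - e3) - 4*(dot3 b n)*r2'
      + (4*(dot3 c n) + 2*(dot3 a n))*r1' + 2*(dot3 a n)*r4'
  · -- second Codazzi equation
    have Hd11 : dvS (h11 x) w
        = -(dot3 b p + dot3 p b) / P ^ 2 * dot3 a n
          + P⁻¹ * (dot3 (dv (du (du x)) w) n + dot3 a (cross3 b q) + dot3 a (cross3 p c)) := by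
      have := hder (du (du x)) hauw ((0:ℝ),(1:ℝ))
      rw [show dvS (h11 x) w = fderiv ℝ (fun y => dot3 (du (du x) y) (Nf x y)) w ((0:ℝ),(1:ℝ))
        from rfl, this]
      rfl
    have Hd12 : duS (h12 x) w
        = -(dot3 a p + dot3 p a) / P ^ 2 * dot3 b n
          + P⁻¹ * (dot3 (dv (du (du x)) w) n + dot3 b (cross3 a q) + dot3 b (cross3 p b)) := by
      have := hder (dv (du x)) hbvw ((1:ℝ),(0:ℝ))
      rw [show duS (h12 x) w = fderiv ℝ (fun y => dot3 (dv (du x) y) (Nf x y)) w ((1:ℝ),(0:ℝ))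
        from rfl, this,
        show (fderiv ℝ (dv x) w ((1:ℝ),(0:ℝ))) = b from hbb,
        show (fderiv ℝ (dv (du x)) w ((1:ℝ),(0:ℝ))) = dv (du (du x)) w from h3c]
      rfl
    have z2 : dot3 b (cross3 p b) = 0 := by
      simp only [dot3, cross3_app0, cross3_app1, cross3_app2]; ring
    rw [Hd11, Hd12, HdWv, Hm]
    have cpa := dot3_comm p a
    have cpb := dot3_comm p b
    rw [cpa, cpb]
    field_simp
    linear_combination 2*(f1 + f3 - f2) - 2*P*z2 - 2*(dot3 a n)*r2'
      - 2*(dot3 c n)*r3'
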